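/- On a probability space, let x be a square-integrable random vector in ℝ^K with zero mean and covariance E[x xᵀ] = V_x; let w_1,…,w_l be square-integrable random vectors in ℝ^K with zero mean and common covariance E[w_m w_mᵀ] = V_w; let z_0,…,z_l be real square-integrable random variables with zero mean and variance σ_z²; and assume x, w_1,…,w_l, z_0,…,z_l are all mutually independent. For b ∈ ℝ^K and A ∈ ℝ^{K×K}, define c_i = z_i + Σ_{m=1}^{i} bᵀA^{i−m} w_m, y_i = bᵀA^i x + c_i for i = 0,…,l, and x' = A^l x + Σ_{i=1}^{l} A^{l−i} w_i. Let M ∈ ℝ^{(l+1)×K} be the matrix whose i-th row (i = 0,…,l) is bᵀA^i; let V_c be the (l+1)×(l+1) matrix with entries [V_c]_{i,j} = σ_z²·δ_{ij} + bᵀ(Σ_{u=1}^{min(i,j)} A^{i−u} V_w (A^{j−u})ᵀ) b; and for m = 1,…,l let C_m ∈ ℝ^{(l+1)×K} be the matrix whose i-th row equals bᵀA^{i−m}V_w if i ≥ m and is zero otherwise. Then for every g ∈ ℝ^{l+1}, E[(Σ_{i=0}^{l} g_i y_i − 𝟙ᵀ x')²] = gᵀ(M V_x Mᵀ + V_c)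 g − 2 gᵀ(M V_x (A^l)ᵀ 𝟙 + Σ_{m=1}^{l} C_m (A^{l−m})ᵀ 𝟙) + 𝟙ᵀ A^l V_x (A^l)ᵀ 𝟙 + Σ_{i=1}^{l} 𝟙ᵀ A^{l−i} V_w (A^{l−i})ᵀ 𝟙. -/

import Mathlib

open Matrix Finset MeasureTheory ProbabilityTheory

section Helpers
variable {Ω : Type*} {mΩ : MeasurableSpace Ω} {μ : Measure Ω} [IsProbabilityMeasure μ]

lemma mylem_int_mul {f g : Ω → ℝ} (hf : MemLp f 2 μ) (hg : MemLp g 2 μ) :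
    Integrable (fun ω => f ω * g ω) μ := by
  exact hf.integrable_mul hg

lemma mylem_sum_sq {ι : Type*} [Fintype ι] (F : ι → Ω → ℝ)
    (hF : ∀ s, MemLp (F s) 2 μ) (hmean : ∀ s, ∫ ω, F s ω ∂μ = 0)
    (hind : ∀ s t, s ≠ t → IndepFun (F s) (F t) μ) :
    ∫ ω, (∑ s, F s ω) ^ 2 ∂μ = ∑ s, ∫ ω, (F s ω) ^ 2 ∂μ := by
  have hint : ∀ s t : ι, Integrable (fun ω => F s ω * F t ω) μ :=
    fun s t => mylem_int_mul (hF s) (hF t)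
  have h1 : ∀ ω, (∑ s, F s ω) ^ 2 = ∑ s, ∑ t, F s ω * F t ω := by
    intro ω; rw [sq, Finset.sum_mul_sum]
  simp_rw [h1]
  rw [integral_finset_sum _ fun s _ => integrable_finset_sum _ fun t _ => hint s t]
  have h2 : ∀ s, ∫ ω, ∑ t, F s ω * F t ω ∂μ = ∑ t, ∫ ω, F s ω * F t ω ∂μ :=
    fun s => integral_finset_sum _ fun t _ => hint s t
  simp_rw [h2]
  refine Finset.sum_congr rfl fun s _ => ?_
  rw [Finset.sum_eq_single s]
  · simp [sq]
  · intro t _ hts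
    have h := (hind s t (Ne.symm hts)).integral_mul_eq_mul_integral
      (hF s).aestronglyMeasurable (hF t).aestronglyMeasurable
    rw [hmean s, hmean t, mul_zero] at h
    exact h
  · intro h; exact absurd (Finset.mem_univ s) h

variable {K : ℕ}

lemma mylem_dot_memL2 {X : Ω → Fin K → ℝ} (hL2 : ∀ k, MemLp (fun ω => X ω k) 2 μ)
    (u : Fin K → ℝ) : MemLp (fun ω => u ⬝ᵥ X ω) 2 μ := by
  simp_rw [dotProduct]
  exact memLp_finset_sum _ fun k _ => (hL2 k).const_mul (u k)

lemma mylem_dot_mean {X : Ω → Fin K → ℝ} (hL2 : ∀ k, MemLp (fun ω => X ω k) 2 μ)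
    (hmean : ∀ k, ∫ ω, X ω k ∂μ = 0) (u : Fin K → ℝ) :
    ∫ ω, u ⬝ᵥ X ω ∂μ = 0 := by
  simp_rw [dotProduct]
  rw [integral_finset_sum _ fun k _ => ((hL2 k).integrable one_le_two).const_mul _]
  simp [integral_const_mul, hmean]

lemma mylem_dot_cov {X : Ω → Fin K → ℝ} {V : Matrix (Fin K) (Fin K) ℝ}
    (hL2 : ∀ k, MemLp (fun ω => X ω k) 2 μ)
    (hcov : ∀ i j, ∫ ω, X ω i * X ω j ∂μ = V i j) (u v : Fin K → ℝ) :
    ∫ ω, (u ⬝ᵥ X ω) * (v ⬝ᵥ X ω) ∂μ = u ⬝ᵥ V.mulVec v := by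
  have h1 : ∀ ω, (u ⬝ᵥ X ω) * (v ⬝ᵥ X ω) = ∑ i, ∑ j, u i * v j * (X ω i * X ω j) := by
    intro ω
    rw [dotProduct, dotProduct, Finset.sum_mul_sum]
    exact Finset.sum_congr rfl fun i _ => Finset.sum_congr rfl fun j _ => by ring
  simp_rw [h1]
  rw [integral_finset_sum _ fun i _ => integrable_finset_sum _ fun j _ =>
    ((mylem_int_mul (hL2 i) (hL2 j)).const_mul _)]
  have h2 : ∀ i, ∫ ω, ∑ j, u i * v j * (X ω i * X ω j) ∂μ
      = ∑ j, u i * v j * (V i j) := by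
    intro i
    rw [integral_finset_sum _ fun j _ => ((mylem_int_mul (hL2 i) (hL2 j)).const_mul _)]
    exact Finset.sum_congr rfl fun j _ => by rw [integral_const_mul, hcov]
  simp_rw [h2, dotProduct, mulVec, dotProduct, Finset.mul_sum]
  exact Finset.sum_congr rfl fun i _ => Finset.sum_congr rfl fun j _ => by ring

end Helpers

lemma mylem_reindex (l : ℕ) (h : ℕ → ℝ) :
    ∑ m : Fin l, h ((m : ℕ) + 1) = ∑ m ∈ Finset.Icc 1 l, h m := by
  rw [Fin.sum_univ_eq_sum_range (fun m => h (m + 1)) l]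
  induction l with
  | zero => simp
  | succ n ih =>
      rw [Finset.sum_range_succ, ih, ← Finset.insert_Icc_right_eq_Icc_add_one (by omega),
        Finset.sum_insert (by simp)]
      ring

lemma mylem_dot_sum {K : ℕ} {ι : Type*} (s : Finset ι) (u : Fin K → ℝ)
    (v : ι → Fin K → ℝ) : u ⬝ᵥ (∑ i ∈ s, v i) = ∑ i ∈ s, u ⬝ᵥ v i := by
  simp only [dotProduct, Finset.sum_apply, Finset.mul_sum]
  exact Finset.sum_comm

lemma mylem_sum_mulVec {n K : ℕ} {ι : Type*} (s : Finset ι)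
    (P : ι → Matrix (Fin n) (Fin K) ℝ) (v : Fin K → ℝ) :
    (∑ m ∈ s, P m).mulVec v = ∑ m ∈ s, (P m).mulVec v := by
  ext i
  simp only [Matrix.mulVec, dotProduct, Matrix.sum_apply, Finset.sum_apply, Finset.sum_mul]
  exact Finset.sum_comm

lemma mylem_entry3 {n p K : ℕ} (P : Matrix (Fin n) (Fin K) ℝ) (V : Matrix (Fin K) (Fin K) ℝ)
    (Q : Matrix (Fin p) (Fin K) ℝ) (i : Fin n) (j : Fin p) :
    (P * V * Qᵀ) i j = P i ⬝ᵥ V.mulVec (Q j) := by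
  simp only [Matrix.mul_apply, Matrix.transpose_apply, Matrix.mulVec, dotProduct,
    Finset.mul_sum, Finset.sum_mul]
  rw [Finset.sum_comm]
  exact Finset.sum_congr rfl fun k _ => Finset.sum_congr rfl fun k' _ => by ring

lemma mylem_quad_sub {K : ℕ} {V : Matrix (Fin K) (Fin K) ℝ} (hV : Vᵀ = V)
    (u v : Fin K → ℝ) :
    (u - v) ⬝ᵥ V.mulVec (u - v)
      = u ⬝ᵥ V.mulVec u - 2 * (u ⬝ᵥ V.mulVec v) + v ⬝ᵥ V.mulVec v := by
  have h2 : v ᵥ* V = V *ᵥ v := by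
    conv_lhs => rw [← hV]
    exact vecMul_transpose V v
  have hsymm : v ⬝ᵥ V.mulVec u = u ⬝ᵥ V.mulVec v := by
    rw [dotProduct_mulVec, h2, dotProduct_comm]
  rw [Matrix.mulVec_sub, dotProduct_sub, sub_dotProduct, sub_dotProduct, hsymm]
  ring

lemma mylem_dot3 {n p K : ℕ} (P : Matrix (Fin n) (Fin K) ℝ) (V : Matrix (Fin K) (Fin K) ℝ)
    (Q : Matrix (Fin p) (Fin K) ℝ) (g : Fin n → ℝ) (h : Fin p → ℝ) :
    g ⬝ᵥ (P * V * Qᵀ).mulVec h = (g ᵥ* P) ⬝ᵥ V.mulVec (h ᵥ* Q) := by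
  rw [Matrix.mul_assoc, ← Matrix.mulVec_mulVec, dotProduct_mulVec (v := g),
    ← Matrix.mulVec_mulVec, Matrix.mulVec_transpose, ← dotProduct_mulVec]

set_option maxHeartbeats 3000000 in
/-- Closed-form computation MSE (eq. (21)) of the low-complexity AirComp policy: applying a
linear filter `g` to the stacked received signals `y_i = bᵀA^i x + c_i` to estimate the sum
`𝟙ᵀ x'` of the current sensor signals `x' = A^l x + Σ_{i=1}^{l} A^{l−i} w_i` gives
`E[(Σ_i g_i y_i − 𝟙ᵀx')²] = gᵀ(M V_x Mᵀ + V_c)g − 2gᵀ(M V_x (A^l)ᵀ𝟙 + Σ_m C_m (A^{l−m})ᵀ𝟙)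
+ 𝟙ᵀA^l V_x (A^l)ᵀ𝟙 + Σ_i 𝟙ᵀA^{l−i} V_w (A^{l−i})ᵀ𝟙`. -/
theorem stmt9 {Ω : Type*} {mΩ : MeasurableSpace Ω} (μ : Measure Ω) [IsProbabilityMeasure μ]
    (K l : ℕ) (hK : 0 < K) (hl : 0 < l)
    (A Vx Vw : Matrix (Fin K) (Fin K) ℝ) (b : Fin K → ℝ) (σz2 : ℝ)
    (x : Ω → Fin K → ℝ) (w : ℕ → Ω → Fin K → ℝ) (z : ℕ → Ω → ℝ)
    (hindep : iIndepFun
      (m := fun s : Unit ⊕ (Fin l ⊕ Fin (l + 1)) =>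
        Sum.rec (motive := fun s => MeasurableSpace (Sum.elim (fun _ : Unit => Fin K → ℝ)
            (Sum.elim (fun _ : Fin l => Fin K → ℝ) (fun _ : Fin (l + 1) => ℝ)) s))
          (fun _ => (inferInstance : MeasurableSpace (Fin K → ℝ)))
          (fun s => Sum.rec (motive := fun s => MeasurableSpace
              (Sum.elim (fun _ : Fin l => Fin K → ℝ) (fun _ : Fin (l + 1) => ℝ) s))
            (fun _ => (inferInstance : MeasurableSpace (Fin K → ℝ)))
            (fun _ => (inferInstance : MeasurableSpace ℝ)) s) s)
      (fun s : Unit ⊕ (Fin l ⊕ Fin (l + 1)) =>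
        Sum.rec (motive := fun s => Ω → Sum.elim (fun _ : Unit => Fin K → ℝ)
            (Sum.elim (fun _ : Fin l => Fin K → ℝ) (fun _ : Fin (l + 1) => ℝ)) s)
          (fun _ => x)
          (fun s => Sum.rec (motive := fun s => Ω →
              Sum.elim (fun _ : Fin l => Fin K → ℝ) (fun _ : Fin (l + 1) => ℝ) s)
            (fun m => w ((m : ℕ) + 1)) (fun i => z (i : ℕ)) s) s) μ)
    (hL2x : ∀ k, MemLp (fun ω => x ω k) 2 μ)
    (hmeanx : ∀ k, ∫ ω, x ω k ∂μ = 0)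
    (hcovx : ∀ i j, ∫ ω, x ω i * x ω j ∂μ = Vx i j)
    (hL2w : ∀ m, 1 ≤ m → m ≤ l → ∀ k, MemLp (fun ω => w m ω k) 2 μ)
    (hmeanw : ∀ m, 1 ≤ m → m ≤ l → ∀ k, ∫ ω, w m ω k ∂μ = 0)
    (hcovw : ∀ m, 1 ≤ m → m ≤ l → ∀ i j, ∫ ω, w m ω i * w m ω j ∂μ = Vw i j)
    (hL2z : ∀ i, i ≤ l → MemLp (z i) 2 μ)
    (hmeanz : ∀ i, i ≤ l → ∫ ω, z i ω ∂μ = 0)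
    (hvarz : ∀ i, i ≤ l → ∫ ω, (z i ω) ^ 2 ∂μ = σz2)
    (c : ℕ → Ω → ℝ)
    (hc : ∀ i ω, c i ω = z i ω + ∑ m ∈ Finset.Icc 1 i, b ⬝ᵥ (A ^ (i - m)).mulVec (w m ω))
    (y : ℕ → Ω → ℝ)
    (hy : ∀ i ω, y i ω = b ⬝ᵥ (A ^ i).mulVec (x ω) + c i ω)
    (x' : Ω → Fin K → ℝ)
    (hx' : ∀ ω, x' ω = (A ^ l).mulVec (x ω)
      + ∑ i ∈ Finset.Icc 1 l, (A ^ (l - i)).mulVec (w i ω))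
    (M : Matrix (Fin (l + 1)) (Fin K) ℝ)
    (hM : M = Matrix.of fun (i : Fin (l + 1)) (k : Fin K) => (b ᵥ* A ^ (i : ℕ)) k)
    (Vc : Matrix (Fin (l + 1)) (Fin (l + 1)) ℝ)
    (hVc : Vc = Matrix.of fun (i j : Fin (l + 1)) =>
      (if i = j then σz2 else 0)
        + b ⬝ᵥ (∑ u ∈ Finset.Icc 1 (min (i : ℕ) (j : ℕ)),
            A ^ ((i : ℕ) - u) * Vw * (A ^ ((j : ℕ) - u))ᵀ).mulVec b)
    (C : ℕ → Matrix (Fin (l + 1)) (Fin K) ℝ)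
    (hC : ∀ m, C m = Matrix.of fun (i : Fin (l + 1)) (k : Fin K) =>
      if m ≤ (i : ℕ) then (b ᵥ* (A ^ ((i : ℕ) - m) * Vw)) k else 0) :
    ∀ g : Fin (l + 1) → ℝ,
      ∫ ω, (∑ i : Fin (l + 1), g i * y (i : ℕ) ω - (1 : Fin K → ℝ) ⬝ᵥ x' ω) ^ 2 ∂μ
        = g ⬝ᵥ (M * Vx * Mᵀ + Vc).mulVec g
          - 2 * (g ⬝ᵥ ((M * Vx * (A ^ l)ᵀ).mulVec 1
              + ∑ m ∈ Finset.Icc 1 l, (C m * (A ^ (l - m))ᵀ).mulVec 1))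
          + (1 : Fin K → ℝ) ⬝ᵥ (A ^ l * Vx * (A ^ l)ᵀ).mulVec 1
          + ∑ i ∈ Finset.Icc 1 l,
              (1 : Fin K → ℝ) ⬝ᵥ (A ^ (l - i) * Vw * (A ^ (l - i))ᵀ).mulVec 1 := by
  intro g
  -- abbreviations
  set α : Fin K → ℝ := g ᵥ* M - (1 : Fin K → ℝ) ᵥ* (A ^ l) with hα
  set D : ℕ → Matrix (Fin (l + 1)) (Fin K) ℝ := fun m => Matrix.of fun i k =>
    if m ≤ (i : ℕ) then (b ᵥ* A ^ ((i : ℕ) - m)) k else 0 with hD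
  set β : ℕ → Fin K → ℝ := fun m => g ᵥ* D m - (1 : Fin K → ℝ) ᵥ* (A ^ (l - m)) with hβ
  set F : (Unit ⊕ (Fin l ⊕ Fin (l + 1))) → Ω → ℝ := fun s ω =>
    match s with
    | .inl _ => α ⬝ᵥ x ω
    | .inr (.inl m) => β ((m : ℕ) + 1) ⬝ᵥ w ((m : ℕ) + 1) ω
    | .inr (.inr i) => g i * z (i : ℕ) ω
    with hF
  -- pointwise identity
  have key : ∀ ω, ∑ i : Fin (l + 1), g i * y (i : ℕ) ω - (1 : Fin K → ℝ) ⬝ᵥ x' ω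
      = ∑ s, F s ω := by
    intro ω
    rw [Fintype.sum_sum_type, Fintype.sum_sum_type]
    simp only [hF, Finset.univ_unique, Finset.sum_singleton]
    have hdotsum : ∀ {ι : Type} (s : Finset ι) (u : Fin K → ℝ) (v : ι → Fin K → ℝ),
        u ⬝ᵥ (∑ i ∈ s, v i) = ∑ i ∈ s, u ⬝ᵥ v i := by
      intro ι s u v
      simp only [dotProduct, Finset.sum_apply, Finset.mul_sum]
      exact Finset.sum_comm
    have hMdot : ∀ v : Fin K → ℝ,
        (g ᵥ* M) ⬝ᵥ v = ∑ i : Fin (l + 1), g i * (b ⬝ᵥ (A ^ (i : ℕ)).mulVec v) := by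
      intro v
      rw [← dotProduct_mulVec, dotProduct]
      refine Finset.sum_congr rfl fun i _ => ?_
      congr 1
      show (M *ᵥ v) i = _
      rw [hM]
      show (Matrix.of fun (i : Fin (l+1)) (k : Fin K) => (b ᵥ* A ^ (i : ℕ)) k) i ⬝ᵥ v = _
      rw [dotProduct_mulVec]
      rfl
    have hDdot : ∀ (m : ℕ) (v : Fin K → ℝ),
        (g ᵥ* D m) ⬝ᵥ v = ∑ i : Fin (l + 1),
          g i * (if m ≤ (i : ℕ) then b ⬝ᵥ (A ^ ((i : ℕ) - m)).mulVec v else 0) := by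
      intro m v
      rw [← dotProduct_mulVec, dotProduct]
      refine Finset.sum_congr rfl fun i _ => ?_
      congr 1
      show (D m *ᵥ v) i = _
      rw [hD]
      show ((Matrix.of fun (i : Fin (l+1)) (k : Fin K) =>
        if m ≤ (i : ℕ) then (b ᵥ* A ^ ((i : ℕ) - m)) k else 0) i) ⬝ᵥ v = _
      by_cases hmi : m ≤ (i : ℕ)
      · rw [if_pos hmi, dotProduct_mulVec]
        simp [dotProduct, hmi]
      · rw [if_neg hmi]
        simp [dotProduct, hmi]
    have hone : ∀ (P : Matrix (Fin K) (Fin K) ℝ) (v : Fin K → ℝ),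
        ((1 : Fin K → ℝ) ᵥ* P) ⬝ᵥ v = (1 : Fin K → ℝ) ⬝ᵥ P.mulVec v := by
      intro P v; rw [dotProduct_mulVec]
    -- expand the right-hand side
    simp only [hβ, hα, sub_dotProduct, hMdot, hDdot, hone]
    -- expand the left-hand side
    simp only [hy, hc, hx']
    rw [dotProduct_add, hdotsum]
    have hLHS : ∀ i : Fin (l + 1),
        g i * (b ⬝ᵥ (A ^ (i : ℕ)).mulVec (x ω) + (z (i : ℕ) ω
          + ∑ m ∈ Finset.Icc 1 (i : ℕ), b ⬝ᵥ (A ^ ((i : ℕ) - m)).mulVec (w m ω)))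
        = g i * (b ⬝ᵥ (A ^ (i : ℕ)).mulVec (x ω)) + g i * z (i : ℕ) ω
          + ∑ m ∈ Finset.Icc 1 l,
              g i * (if m ≤ (i : ℕ) then b ⬝ᵥ (A ^ ((i : ℕ) - m)).mulVec (w m ω) else 0) := by
      intro i
      have hsub : ∑ m ∈ Finset.Icc 1 (i : ℕ), b ⬝ᵥ (A ^ ((i : ℕ) - m)).mulVec (w m ω)
          = ∑ m ∈ Finset.Icc 1 l,
              (if m ≤ (i : ℕ) then b ⬝ᵥ (A ^ ((i : ℕ) - m)).mulVec (w m ω) else 0) := by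
        rw [Finset.sum_congr rfl (g := fun m =>
            if m ≤ (i : ℕ) then b ⬝ᵥ (A ^ ((i : ℕ) - m)).mulVec (w m ω) else 0)
          (fun m hm => (if_pos (Finset.mem_Icc.mp hm).2).symm)]
        refine Finset.sum_subset (Finset.Icc_subset_Icc_right (by omega)) fun m hm hnm => ?_
        rw [if_neg]
        simp only [Finset.mem_Icc] at hm hnm
        omega
      rw [hsub, mul_add, mul_add, Finset.mul_sum]
      ring
    simp only [hLHS]
    rw [Finset.sum_add_distrib, Finset.sum_add_distrib, Finset.sum_comm]
    rw [mylem_reindex l (fun m => (∑ i : Fin (l + 1),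
        g i * (if m ≤ (i : ℕ) then b ⬝ᵥ (A ^ ((i : ℕ) - m)).mulVec (w m ω) else 0))
      - (1 : Fin K → ℝ) ⬝ᵥ (A ^ (l - m)).mulVec (w m ω)), Finset.sum_sub_distrib]
    ring

  -- L² membership
  have hFL2 : ∀ s, MemLp (F s) 2 μ := by
    rintro (_ | m | i)
    · exact mylem_dot_memL2 hL2x α
    · exact mylem_dot_memL2
        (hL2w ((m : ℕ) + 1) (by omega) (Nat.succ_le_of_lt m.isLt)) _
    · exact (hL2z (i : ℕ) (Nat.lt_succ_iff.mp i.isLt)).const_mul _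
  -- zero mean
  have hFmean : ∀ s, ∫ ω, F s ω ∂μ = 0 := by
    rintro (_ | m | i)
    · exact mylem_dot_mean hL2x hmeanx α
    · exact mylem_dot_mean
        (hL2w ((m : ℕ) + 1) (by omega) (Nat.succ_le_of_lt m.isLt))
        (hmeanw ((m : ℕ) + 1) (by omega) (Nat.succ_le_of_lt m.isLt)) _
    · show ∫ ω, g i * z (i : ℕ) ω ∂μ = 0
      rw [integral_const_mul, hmeanz (i : ℕ) (Nat.lt_succ_iff.mp i.isLt), mul_zero]
  -- independence
  have hFind : ∀ s t, s ≠ t → IndepFun (F s) (F t) μ := by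
    have hmdot : ∀ u : Fin K → ℝ, Measurable fun v : Fin K → ℝ => u ⬝ᵥ v := fun u =>
      Finset.measurable_sum _ fun k _ => by fun_prop
    have hmmul : ∀ r : ℝ, Measurable fun t : ℝ => r * t := fun r =>
      measurable_id.const_mul r
    intro s t hst
    have h := hindep.indepFun hst
    match s, t with
    | .inl _, .inl _ => exact absurd rfl hst
    | .inl _, .inr (.inl m) => exact h.comp (hmdot α) (hmdot (β ((m : ℕ) + 1)))
    | .inl _, .inr (.inr i) => exact h.comp (hmdot α) (hmmul (g i))
    | .inr (.inl m), .inl _ => exact h.comp (hmdot (β ((m : ℕ) + 1))) (hmdot α)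
    | .inr (.inl m), .inr (.inl m') =>
        exact h.comp (hmdot (β ((m : ℕ) + 1))) (hmdot (β ((m' : ℕ) + 1)))
    | .inr (.inl m), .inr (.inr i) => exact h.comp (hmdot (β ((m : ℕ) + 1))) (hmmul (g i))
    | .inr (.inr i), .inl _ => exact h.comp (hmmul (g i)) (hmdot α)
    | .inr (.inr i), .inr (.inl m) => exact h.comp (hmmul (g i)) (hmdot (β ((m : ℕ) + 1)))
    | .inr (.inr i), .inr (.inr i') => exact h.comp (hmmul (g i)) (hmmul (g i'))
  -- apply the variance decomposition
  simp_rw [key]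
  rw [mylem_sum_sq F hFL2 hFmean hFind]
  -- compute diagonal second moments
  have hVwsymm : Vwᵀ = Vw := by
    ext i j
    rw [Matrix.transpose_apply, ← hcovw 1 le_rfl hl i j, ← hcovw 1 le_rfl hl j i]
    exact integral_congr_ae (Filter.Eventually.of_forall fun ω => mul_comm _ _)
  have hVxsymm : Vxᵀ = Vx := by
    ext i j
    rw [Matrix.transpose_apply, ← hcovx i j, ← hcovx j i]
    exact integral_congr_ae (Filter.Eventually.of_forall fun ω => mul_comm _ _)
  have hsum : ∑ s, ∫ ω, (F s ω) ^ 2 ∂μ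
      = α ⬝ᵥ Vx.mulVec α + (∑ m ∈ Finset.Icc 1 l, β m ⬝ᵥ Vw.mulVec (β m)
        + σz2 * ∑ i : Fin (l + 1), g i ^ 2) := by
    rw [Fintype.sum_sum_type, Fintype.sum_sum_type]
    congr 1
    · simp only [Finset.univ_unique, Finset.sum_singleton]
      simp only [hF]
      simp_rw [sq]
      exact mylem_dot_cov hL2x hcovx α α
    congr 1
    · rw [← mylem_reindex l (fun m => β m ⬝ᵥ Vw.mulVec (β m))]
      refine Finset.sum_congr rfl fun m _ => ?_
      simp only [hF]
      simp_rw [sq]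
      exact mylem_dot_cov (hL2w ((m : ℕ) + 1) (by omega) (by omega))
        (hcovw ((m : ℕ) + 1) (by omega) (by omega)) _ _
    · rw [Finset.mul_sum]
      refine Finset.sum_congr rfl fun i _ => ?_
      simp only [hF]
      have : ∀ ω, (g i * z (i : ℕ) ω) ^ 2 = g i ^ 2 * (z (i : ℕ) ω) ^ 2 := fun ω => by ring
      simp_rw [this]
      rw [integral_const_mul, hvarz (i : ℕ) (by omega)]
      ring
  rw [hsum]
  -- final deterministic algebra
  have hDpos : ∀ (m : ℕ) (i : Fin (l + 1)), m ≤ (i : ℕ) →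
      D m i = b ᵥ* A ^ ((i : ℕ) - m) := by
    intro m i hmi; ext k; rw [hD]; simp [hmi]
  have hDneg : ∀ (m : ℕ) (i : Fin (l + 1)), ¬ m ≤ (i : ℕ) → D m i = 0 := by
    intro m i hmi; ext k; rw [hD]; simp [hmi]
  have hCD : ∀ m, C m = D m * Vw := by
    intro m
    ext i k
    rw [Matrix.mul_apply, hC, Matrix.of_apply]
    by_cases hmi : m ≤ (i : ℕ)
    · rw [if_pos hmi, hDpos m i hmi, ← Matrix.vecMul_vecMul]
      simp [Matrix.vecMul, dotProduct]
    · rw [if_neg hmi, hDneg m i hmi]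
      simp
  have hVc2 : Vc = σz2 • (1 : Matrix (Fin (l + 1)) (Fin (l + 1)) ℝ)
      + ∑ m ∈ Finset.Icc 1 l, D m * Vw * (D m)ᵀ := by
    ext i j
    have hterm : ∀ m, (D m * Vw * (D m)ᵀ) i j
        = if m ≤ (i : ℕ) ∧ m ≤ (j : ℕ)
            then b ⬝ᵥ (A ^ ((i : ℕ) - m) * Vw * (A ^ ((j : ℕ) - m))ᵀ).mulVec b else 0 := by
      intro m
      rw [mylem_entry3]
      by_cases hmi : m ≤ (i : ℕ)
      · by_cases hmj : m ≤ (j : ℕ)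
        · rw [if_pos ⟨hmi, hmj⟩, hDpos m i hmi, hDpos m j hmj,
            mylem_dot3 (A ^ ((i : ℕ) - m)) Vw (A ^ ((j : ℕ) - m)) b b]
        · rw [if_neg (by tauto), hDneg m j hmj, Matrix.mulVec_zero, dotProduct_zero]
      · rw [if_neg (by tauto), hDneg m i hmi, zero_dotProduct]
    have hsum2 : ∑ m ∈ Finset.Icc 1 l, (D m * Vw * (D m)ᵀ) i j
        = ∑ u ∈ Finset.Icc 1 (min (i : ℕ) (j : ℕ)),
            b ⬝ᵥ (A ^ ((i : ℕ) - u) * Vw * (A ^ ((j : ℕ) - u))ᵀ).mulVec b := by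
      simp_rw [hterm]
      rw [← Finset.sum_subset (Finset.Icc_subset_Icc_right
        (le_trans (min_le_left _ _) (Nat.lt_succ_iff.mp i.isLt)))]
      · refine Finset.sum_congr rfl fun m hm => ?_
        rw [if_pos]
        simp only [Finset.mem_Icc, le_min_iff] at hm
        exact ⟨hm.2.1, hm.2.2⟩
      · intro m hm hnm
        rw [if_neg]
        simp only [Finset.mem_Icc, le_min_iff] at hm hnm
        omega
    rw [Matrix.add_apply, Matrix.sum_apply, hsum2, hVc]
    simp only [Matrix.of_apply, Matrix.smul_apply, Matrix.one_apply, smul_eq_mul,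
      mul_ite, mul_one, mul_zero]
    rw [mylem_sum_mulVec, mylem_dot_sum]
  -- expand the right-hand side
  rw [add_mulVec, dotProduct_add, mylem_dot3 M Vx M g g, hVc2, add_mulVec,
    Matrix.smul_mulVec, Matrix.one_mulVec, dotProduct_add, dotProduct_smul,
    mylem_sum_mulVec, mylem_dot_sum, dotProduct_add, mylem_dot3 M Vx (A ^ l) g 1,
    mylem_dot_sum, mylem_dot3 (A ^ l) Vx (A ^ l) 1 1]
  simp_rw [hCD, mylem_dot3 (D _) Vw (D _) g g, mylem_dot3 (D _) Vw (A ^ (l - _)) g 1,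
    mylem_dot3 (A ^ (l - _)) Vw (A ^ (l - _)) 1 1]
  -- expand the left-hand side
  simp only [hα, hβ]
  rw [mylem_quad_sub hVxsymm]
  simp_rw [mylem_quad_sub hVwsymm]
  rw [Finset.sum_add_distrib, Finset.sum_sub_distrib]
  have hgg : g ⬝ᵥ g = ∑ i : Fin (l + 1), g i ^ 2 := by
    simp [dotProduct, sq]
  rw [smul_eq_mul, hgg, Finset.mul_sum, mul_add, Finset.mul_sum]
  ring
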